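/- For each integer ℓ ≥ 0 and real k > 0, the function X_k^ℓ(ρ) = ((−1)^{ℓ+1} sinhℓρ / (∏_{n=0}^{ℓ}(n²+k²))^{1/2}) · d^{ℓ+1}cos(kρ)/d(coshρ)^{ℓ+1} satisfies the radial equation (1/sinh²ρ) d/dρ(sinh²ρ dX/dρ) + (k² + 1 − ℓ(ℓ+1)/sinh²ρ) X = 0 on (0,∞). -/

import Mathlib

/-!
STATEMENT 2: For each integer ℓ ≥ 0 and real k > 0, the hyperspherical Bessel
function
X_k^ℓ(ρ) = ((−1)^{ℓ+1} sinh^ℓρ / (∏_{n=0}^{ℓ}(n²+k²))^{1/2}) · d^{ℓ+1}cos(kρ)/d(coshρ)^{ℓ+1}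
satisfies the radial equation
(1/sinh²ρ) d/dρ (sinh²ρ dX/dρ) + (k² + 1 − ℓ(ℓ+1)/sinh²ρ) X = 0 on (0,∞).
-/

open Real

/-- `arcosh`, the inverse of `cosh` on `[1,∞)` (not yet in Mathlib). -/
noncomputable def arcosh (x : ℝ) : ℝ := Real.log (x + Real.sqrt (x ^ 2 - 1))

/-- The derivative with respect to `u = cosh ρ`, iterated `m` times and
evaluated back at `u = cosh ρ`: `cos(kρ)` is regarded as the function
`u ↦ cos (k · arcosh u)` of `u`. -/
noncomputable def dCoshIter (k : ℝ) (m : ℕ) (ρ : ℝ) : ℝ :=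
  iteratedDeriv m (fun u => Real.cos (k * _root_.arcosh u)) (Real.cosh ρ)

/-- The radial hyperspherical Bessel function `X_k^ℓ`. -/
noncomputable def hypersphericalBessel (k : ℝ) (ℓ : ℕ) (ρ : ℝ) : ℝ :=
  ((-1 : ℝ) ^ (ℓ + 1) * Real.sinh ρ ^ ℓ /
      Real.sqrt (∏ n ∈ Finset.range (ℓ + 1), ((n : ℝ) ^ 2 + k ^ 2))) *
    dCoshIter k (ℓ + 1) ρ

open Set Filter Topology

lemma arcosh_cosh {ρ : ℝ} (hρ : 0 ≤ ρ) : _root_.arcosh (Real.cosh ρ) = ρ := by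
  unfold _root_.arcosh
  rw [show Real.cosh ρ ^ 2 - 1 = Real.sinh ρ ^ 2 by rw [Real.cosh_sq']; ring,
    Real.sqrt_sq (Real.sinh_nonneg_iff.mpr hρ), Real.cosh_add_sinh, Real.log_exp]

lemma contDiffAt_target {k : ℝ} {u : ℝ} (hu : 1 < u) :
    ContDiffAt ℝ (⊤ : ℕ∞) (fun u => Real.cos (k * _root_.arcosh u)) u := by
  have h0 : (0:ℝ) < u ^ 2 - 1 := by nlinarith
  have h1 : ContDiffAt ℝ (⊤ : ℕ∞) (fun u : ℝ => u ^ 2 - 1) u :=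
    ((contDiff_id.pow 2).sub contDiff_const).contDiffAt
  have h2 : ContDiffAt ℝ (⊤ : ℕ∞) (fun u : ℝ => Real.sqrt (u ^ 2 - 1)) u :=
    (Real.contDiffAt_sqrt h0.ne').comp u h1
  have h3 : ContDiffAt ℝ (⊤ : ℕ∞) (fun u : ℝ => u + Real.sqrt (u ^ 2 - 1)) u :=
    contDiffAt_id.add h2
  have hpos : 0 < u + Real.sqrt (u ^ 2 - 1) := by
    have := Real.sqrt_nonneg (u ^ 2 - 1); linarith
  have h4 : ContDiffAt ℝ (⊤ : ℕ∞) _root_.arcosh u :=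
    (Real.contDiffAt_log.mpr hpos.ne').comp u h3
  exact Real.contDiff_cos.contDiffAt.comp u (contDiffAt_const.mul h4)

lemma diffAt_iter {k : ℝ} (m : ℕ) {u : ℝ} (hu : 1 < u) :
    DifferentiableAt ℝ (iteratedDeriv m (fun u => Real.cos (k * _root_.arcosh u))) u := by
  set f : ℝ → ℝ := fun u => Real.cos (k * _root_.arcosh u)
  have hsO : IsOpen (Ioi (1:ℝ)) := isOpen_Ioi
  have hC : ContDiffOn ℝ (⊤ : ℕ∞) f (Ioi 1) :=
    fun x hx => (contDiffAt_target hx).contDiffWithinAt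
  have hd : DifferentiableWithinAt ℝ (iteratedDerivWithin m f (Ioi 1)) (Ioi 1) u :=
    hC.differentiableOn_iteratedDerivWithin (by exact_mod_cast lt_of_lt_of_le (WithTop.coe_lt_top m) le_rfl)
      hsO.uniqueDiffOn u hu
  have heq : ∀ x ∈ Ioi (1:ℝ), iteratedDerivWithin m f (Ioi 1) x = iteratedDeriv m f x := by
    intro x hx
    simp only [iteratedDerivWithin, iteratedDeriv, iteratedFDerivWithin_of_isOpen m hsO hx]
  have hev : iteratedDerivWithin m f (Ioi 1) =ᶠ[𝓝 u] iteratedDeriv m f := by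
    filter_upwards [hsO.mem_nhds hu] using heq
  exact (Filter.EventuallyEq.differentiableAt_iff hev).mp (hd.differentiableAt (hsO.mem_nhds hu))

lemma hasDerivAt_dCoshIter {k : ℝ} (m : ℕ) {ρ : ℝ} (hρ : 0 < ρ) :
    HasDerivAt (dCoshIter k m) (Real.sinh ρ * dCoshIter k (m + 1) ρ) ρ := by
  have h1 : 1 < Real.cosh ρ := Real.one_lt_cosh.mpr hρ.ne'
  have hd := (diffAt_iter (k := k) m h1).hasDerivAt
  have : HasDerivAt (dCoshIter k m) (deriv (iteratedDeriv m fun u => Real.cos (k * _root_.arcosh u)) (Real.cosh ρ) * Real.sinh ρ) ρ := hd.comp ρ (Real.hasDerivAt_cosh ρ)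
  convert this using 1
  rw [dCoshIter, iteratedDeriv_succ]
  ring

lemma dCoshIter_zero {k ρ : ℝ} (hρ : 0 < ρ) : dCoshIter k 0 ρ = Real.cos (k * ρ) := by
  simp [dCoshIter, _root_.arcosh_cosh hρ.le]

lemma dCoshIter_one {k ρ : ℝ} (hρ : 0 < ρ) :
    dCoshIter k 1 ρ = -(k * Real.sin (k * ρ)) / Real.sinh ρ := by
  have hs : Real.sinh ρ ≠ 0 := (Real.sinh_pos_iff.mpr hρ).ne'
  have hev : dCoshIter k 0 =ᶠ[𝓝 ρ] fun r => Real.cos (k * r) := by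
    filter_upwards [Ioi_mem_nhds hρ] with r hr using dCoshIter_zero hr
  have h2 : HasDerivAt (fun r => Real.cos (k * r)) (-Real.sin (k * ρ) * k) ρ := by
    have H := (Real.hasDerivAt_cos (k * ρ)).comp ρ ((hasDerivAt_id ρ).const_mul k)
    simpa [Function.comp_def] using H
  have h3 := (hasDerivAt_dCoshIter (k := k) 0 hρ).deriv
  rw [hev.deriv_eq, h2.deriv] at h3
  field_simp at h3 ⊢
  linarith [h3]

lemma dCoshIter_rec (k : ℝ) (m : ℕ) : ∀ ρ : ℝ, 0 < ρ →
    (Real.cosh ρ ^ 2 - 1) * dCoshIter k (m + 2) ρ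
      + (2 * (m : ℝ) + 1) * Real.cosh ρ * dCoshIter k (m + 1) ρ
      + ((m : ℝ) ^ 2 + k ^ 2) * dCoshIter k m ρ = 0 := by
  induction m with
  | zero =>
    intro ρ hρ
    have hs : Real.sinh ρ ≠ 0 := (Real.sinh_pos_iff.mpr hρ).ne'
    -- value of dCoshIter k 2
    have hev : dCoshIter k 1 =ᶠ[𝓝 ρ] fun r => -(k * Real.sin (k * r)) / Real.sinh r := by
      filter_upwards [Ioi_mem_nhds hρ] with r hr using dCoshIter_one hr
    have hN : HasDerivAt (fun r => -(k * Real.sin (k * r)))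
        (-(k * (Real.cos (k * ρ) * k))) ρ := by
      have H := (Real.hasDerivAt_sin (k * ρ)).comp ρ ((hasDerivAt_id ρ).const_mul k)
      have H2 : HasDerivAt (fun r => Real.sin (k * r)) (Real.cos (k * ρ) * k) ρ := by
        simpa [Function.comp_def] using H
      exact (H2.const_mul k).neg
    have hQ : HasDerivAt (fun r => -(k * Real.sin (k * r)) / Real.sinh r) _ ρ := hN.div (Real.hasDerivAt_sinh ρ) hs
    have h3 := (hasDerivAt_dCoshIter (k := k) 1 hρ).deriv
    rw [hev.deriv_eq, hQ.deriv] at h3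
    have h1 := dCoshIter_one (k := k) hρ
    have h0 := dCoshIter_zero (k := k) hρ
    have hsq : Real.cosh ρ ^ 2 = 1 + Real.sinh ρ ^ 2 := Real.cosh_sq' ρ
    field_simp at h3
    push_cast
    rw [h0, h1]
    field_simp
    norm_num at h3
    linear_combination dCoshIter k 2 ρ * Real.sinh ρ * hsq - h3
  | succ m ih =>
    intro ρ hρ
    have hs : Real.sinh ρ ≠ 0 := (Real.sinh_pos_iff.mpr hρ).ne'
    set g : ℕ → ℝ → ℝ := fun j => dCoshIter k j with hg
    have hev : (fun r => (Real.cosh r ^ 2 - 1) * g (m + 2) r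
        + (2 * (m : ℝ) + 1) * Real.cosh r * g (m + 1) r
        + ((m : ℝ) ^ 2 + k ^ 2) * g m r) =ᶠ[𝓝 ρ] fun _ => (0 : ℝ) := by
      filter_upwards [Ioi_mem_nhds hρ] with r hr using ih r hr
    have h1 : HasDerivAt (fun r => Real.cosh r ^ 2 - 1)
        (2 * Real.cosh ρ * Real.sinh ρ) ρ := by
      have := ((Real.hasDerivAt_cosh ρ).pow 2).sub_const 1
      simpa [mul_comm, mul_assoc] using this
    have hD : HasDerivAt (fun r => (Real.cosh r ^ 2 - 1) * g (m + 2) r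
        + (2 * (m : ℝ) + 1) * Real.cosh r * g (m + 1) r
        + ((m : ℝ) ^ 2 + k ^ 2) * g m r)
        ((2 * Real.cosh ρ * Real.sinh ρ) * g (m + 2) ρ
          + (Real.cosh ρ ^ 2 - 1) * (Real.sinh ρ * g (m + 3) ρ)
          + ((2 * (m : ℝ) + 1) * Real.sinh ρ * g (m + 1) ρ
            + (2 * (m : ℝ) + 1) * Real.cosh ρ * (Real.sinh ρ * g (m + 2) ρ))
          + ((m : ℝ) ^ 2 + k ^ 2) * (Real.sinh ρ * g (m + 1) ρ)) ρ := by
      exact ((h1.mul (hasDerivAt_dCoshIter (m + 2) hρ)).add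
        (((Real.hasDerivAt_cosh ρ).const_mul (2 * (m : ℝ) + 1)).mul
          (hasDerivAt_dCoshIter (m + 1) hρ))).add
        ((hasDerivAt_dCoshIter m hρ).const_mul ((m : ℝ) ^ 2 + k ^ 2))
    have h0 : (2 * Real.cosh ρ * Real.sinh ρ) * g (m + 2) ρ
          + (Real.cosh ρ ^ 2 - 1) * (Real.sinh ρ * g (m + 3) ρ)
          + ((2 * (m : ℝ) + 1) * Real.sinh ρ * g (m + 1) ρ
            + (2 * (m : ℝ) + 1) * Real.cosh ρ * (Real.sinh ρ * g (m + 2) ρ))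
          + ((m : ℝ) ^ 2 + k ^ 2) * (Real.sinh ρ * g (m + 1) ρ) = 0 := by
      rw [← hD.deriv, hev.deriv_eq]; simp
    have goal' : Real.sinh ρ * ((Real.cosh ρ ^ 2 - 1) * g (m + 1 + 2) ρ
        + (2 * ((m : ℝ) + 1) + 1) * Real.cosh ρ * g (m + 1 + 1) ρ
        + (((m : ℝ) + 1) ^ 2 + k ^ 2) * g (m + 1) ρ) = 0 := by
      rw [show m + 1 + 2 = m + 3 from rfl, show m + 1 + 1 = m + 2 from rfl]
      linear_combination h0
    push_cast
    exact (mul_eq_zero.mp goal').resolve_left hs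

lemma pow_sub_one_mul_sq (x : ℝ) (n : ℕ) : (n : ℝ) * x ^ (n - 1) * x ^ 2 = n * x ^ (n + 1) := by
  cases n with
  | zero => simp
  | succ n => simp only [Nat.add_sub_cancel]; push_cast; ring

/-- `X_k^ℓ` satisfies the radial equation
`(1/sinh²ρ)(sinh²ρ X')' + (k² + 1 − ℓ(ℓ+1)/sinh²ρ) X = 0` on `(0,∞)`. -/
theorem hypersphericalBessel_radial_ode (k : ℝ) (hk : 0 < k) (ℓ : ℕ) :
    ∀ ρ : ℝ, 0 < ρ →
      (1 / Real.sinh ρ ^ 2) *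
          deriv (fun r => Real.sinh r ^ 2 *
            deriv (hypersphericalBessel k ℓ) r) ρ
        + (k ^ 2 + 1 - (ℓ : ℝ) * (ℓ + 1) / Real.sinh ρ ^ 2) *
            hypersphericalBessel k ℓ ρ = 0 := by
  intro ρ hρ
  have hs : Real.sinh ρ ≠ 0 := (Real.sinh_pos_iff.mpr hρ).ne'
  set c : ℝ := (-1 : ℝ) ^ (ℓ + 1) /
      Real.sqrt (∏ n ∈ Finset.range (ℓ + 1), ((n : ℝ) ^ 2 + k ^ 2)) with hc
  have hXfun : hypersphericalBessel k ℓ =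
      fun r => c * (Real.sinh r ^ ℓ * dCoshIter k (ℓ + 1) r) := by
    funext r; rw [hypersphericalBessel, hc]; ring
  have hder : ∀ r : ℝ, 0 < r → HasDerivAt (hypersphericalBessel k ℓ)
      (c * (((ℓ : ℝ) * Real.sinh r ^ (ℓ - 1) * Real.cosh r) * dCoshIter k (ℓ + 1) r
        + Real.sinh r ^ ℓ * (Real.sinh r * dCoshIter k (ℓ + 2) r))) r := by
    intro r hr
    rw [hXfun]
    exact (((Real.hasDerivAt_sinh r).pow ℓ).mul (hasDerivAt_dCoshIter (ℓ + 1) hr)).const_mul c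
  set Z : ℝ → ℝ := fun r => c * ((ℓ : ℝ) * Real.sinh r ^ (ℓ + 1) * Real.cosh r
      * dCoshIter k (ℓ + 1) r + Real.sinh r ^ (ℓ + 3) * dCoshIter k (ℓ + 2) r) with hZdef
  have hev : (fun r => Real.sinh r ^ 2 * deriv (hypersphericalBessel k ℓ) r) =ᶠ[𝓝 ρ] Z := by
    filter_upwards [Ioi_mem_nhds hρ] with r hr
    rw [(hder r hr).deriv, hZdef]
    have h1 := pow_sub_one_mul_sq (Real.sinh r) ℓ
    have h2 : Real.sinh r ^ ℓ * Real.sinh r * Real.sinh r ^ 2 = Real.sinh r ^ (ℓ + 3) := by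
      ring
    simp only []
    linear_combination (c * Real.cosh r * dCoshIter k (ℓ + 1) r) * h1
      + (c * dCoshIter k (ℓ + 2) r) * h2
  rw [hev.deriv_eq]
  have p1 : HasDerivAt (fun r => Real.sinh r ^ (ℓ + 1))
      (((ℓ : ℝ) + 1) * Real.sinh ρ ^ ℓ * Real.cosh ρ) ρ := by
    have := (Real.hasDerivAt_sinh ρ).pow (ℓ + 1)
    simp only [Nat.add_sub_cancel] at this
    push_cast at this
    exact this
  have p2 : HasDerivAt (fun r => Real.sinh r ^ (ℓ + 3))
      (((ℓ : ℝ) + 3) * Real.sinh ρ ^ (ℓ + 2) * Real.cosh ρ) ρ := by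
    have := (Real.hasDerivAt_sinh ρ).pow (ℓ + 3)
    simp only [show ℓ + 3 - 1 = ℓ + 2 by omega] at this
    push_cast at this
    exact this
  have hZ := ((((p1.const_mul (ℓ : ℝ)).mul (Real.hasDerivAt_cosh ρ)).mul
      (hasDerivAt_dCoshIter (k := k) (ℓ + 1) hρ)).add
      (p2.mul (hasDerivAt_dCoshIter (k := k) (ℓ + 2) hρ))).const_mul c
  simp only [Pi.mul_apply, Pi.add_apply] at hZ
  change HasDerivAt Z _ ρ at hZ
  rw [hZ.deriv, hXfun]
  have hrec := dCoshIter_rec k (ℓ + 1) ρ hρ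
  have hsq : Real.cosh ρ ^ 2 = 1 + Real.sinh ρ ^ 2 := Real.cosh_sq' ρ
  push_cast at hrec ⊢
  field_simp
  simp only [show ℓ + 1 + 1 = ℓ + 2 from rfl, show ℓ + 2 + 1 = ℓ + 3 from rfl,
    show ℓ + 1 + 2 = ℓ + 3 from rfl] at hrec ⊢
  linear_combination (c * Real.sinh ρ ^ ℓ * Real.sinh ρ ^ 2) * hrec
    + (c * Real.sinh ρ ^ ℓ * ((ℓ : ℝ) * ((ℓ : ℝ) + 1)) * dCoshIter k (ℓ + 1) ρ
      - c * Real.sinh ρ ^ (ℓ + 2) * dCoshIter k (ℓ + 3) ρ) * hsq
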